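/- (Bernstein inequality) Let $t\in(0,2)$, $x^+$ with $\|x^+\|_{k_t}<\infty$, and $\alpha>0$. Let $P_\alpha$ be the coordinate projection onto $\Lambda_\alpha=\{j:\bar a_j^{-2}\bar r_j\alpha<|x^+_j|\}$. Then for every sequence $x$, $\sum_{j\in\Lambda_\alpha}\bar r_j|x_j| \le \|x^+\|_{k_t}^{t/2}\,\alpha^{-t/2}\,(\sum_{j\in\Lambda}\bar a_j^2|x_j|^2)^{1/2}$. -/

import Mathlib

open scoped ENNReal
noncomputable section

variable {Λ : Type*}

/-- Weighted `ℓ^p` quasi-norm (value in `ℝ≥0∞`). -/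
def wnorm (ω : Λ → ℝ) (p : ℝ) (x : Λ → ℝ) : ℝ≥0∞ :=
  (∑' j, ENNReal.ofReal (ω j ^ p * |x j| ^ p)) ^ (1 / p)

/-- The interpolating weights `(ω_t)_j = (a_j^{2t-2} r_j^{2-t})^{1/t}`. -/
def omegaWeight (a r : Λ → ℝ) (t : ℝ) : Λ → ℝ :=
  fun j => (a j ^ (2 * t - 2) * r j ^ (2 - t)) ^ (1 / t)

/-- Weighted `ℓ¹` norm `‖x‖_{r,1} = ∑ r_j |x_j|`. -/
def rnorm1 (r : Λ → ℝ) (x : Λ → ℝ) : ℝ≥0∞ := ∑' j, ENNReal.ofReal (r j * |x j|)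

/-- Weighted `ℓ²` norm `‖x‖_{a,2} = (∑ a_j² x_j²)^{1/2}`. -/
def anorm2 (a : Λ → ℝ) (x : Λ → ℝ) : ℝ≥0∞ :=
  (∑' j, ENNReal.ofReal (a j ^ 2 * x j ^ 2)) ^ ((1 : ℝ) / 2)

/-- The sum `∑_j a_j⁻² r_j² 𝟙_{a_j⁻² r_j α < |x_j|}`. -/
def kSum (a r : Λ → ℝ) (α : ℝ) (x : Λ → ℝ) : ℝ≥0∞ :=
  ∑' j, ENNReal.ofReal (if r j * α / a j ^ 2 < |x j| then r j ^ 2 / a j ^ 2 else 0)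

/-- The weak quasi-norm `‖x‖_{k_t} = sup_{α>0} α (kSum α x)^{1/t}`. -/
def knorm (a r : Λ → ℝ) (t : ℝ) (x : Λ → ℝ) : ℝ≥0∞ :=
  ⨆ α ∈ Set.Ioi (0 : ℝ), ENNReal.ofReal α * (kSum a r α x) ^ (1 / t)

/-- Hard thresholding operator. -/
def Tthresh (a r : Λ → ℝ) (α : ℝ) (x : Λ → ℝ) : Λ → ℝ :=
  fun j => if r j * α / a j ^ 2 < |x j| then x j else 0

open MeasureTheory in
theorem stmt5 (a r : Λ → ℝ) (ha : ∀ j, 0 < a j) (hr : ∀ j, 0 < r j)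
    (t : ℝ) (ht : t ∈ Set.Ioo (0:ℝ) 2)
    (xplus : Λ → ℝ) (hk : knorm a r t xplus ≠ ⊤)
    (α : ℝ) (hα : 0 < α) (x : Λ → ℝ) :
    ∑' j, ENNReal.ofReal (if r j * α / a j ^ 2 < |xplus j| then r j * |x j| else 0) ≤
      knorm a r t xplus ^ (t / 2) * ENNReal.ofReal (α ^ (-(t / 2))) * anorm2 a x := by
  obtain ⟨ht0, ht2⟩ := ht
  letI : MeasurableSpace Λ := ⊤
  haveI : MeasurableSingletonClass Λ := ⟨fun _ => trivial⟩
  set g : Λ → ℝ≥0∞ := fun j =>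
    (ENNReal.ofReal (if r j * α / a j ^ 2 < |xplus j| then r j ^ 2 / a j ^ 2 else 0)) ^ ((1:ℝ)/2)
    with hg
  set h : Λ → ℝ≥0∞ := fun j => (ENNReal.ofReal (a j ^ 2 * x j ^ 2)) ^ ((1:ℝ)/2) with hh
  -- pointwise factorization
  have key : ∀ j, ENNReal.ofReal (if r j * α / a j ^ 2 < |xplus j| then r j * |x j| else 0)
      = g j * h j := by
    intro j
    by_cases hc : r j * α / a j ^ 2 < |xplus j|
    · simp only [hg, hh, if_pos hc]
      have h1 : (0:ℝ) ≤ r j ^ 2 / a j ^ 2 := by positivity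
      have h2 : (0:ℝ) ≤ a j ^ 2 * x j ^ 2 := by positivity
      rw [ENNReal.ofReal_rpow_of_nonneg h1 (by norm_num),
        ENNReal.ofReal_rpow_of_nonneg h2 (by norm_num),
        ← ENNReal.ofReal_mul (by positivity)]
      congr 1
      rw [← Real.mul_rpow h1 h2]
      have : r j ^ 2 / a j ^ 2 * (a j ^ 2 * x j ^ 2) = (r j * |x j|) ^ 2 := by
        have hane : a j ≠ 0 := (ha j).ne'
        field_simp
        rw [sq_abs]
      rw [this, ← Real.rpow_natCast (r j * |x j|) 2, ← Real.rpow_mul (mul_nonneg (hr j).le (abs_nonneg _))]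
      norm_num
    · simp [hg, hh, if_neg hc]
  rw [tsum_congr key]
  -- Cauchy–Schwarz via Hölder on the counting measure
  have hpq : Real.HolderConjugate 2 2 := Real.HolderConjugate.two_two
  have hmg : Measurable g := fun _ _ => trivial
  have hmh : Measurable h := fun _ _ => trivial
  have holder := ENNReal.lintegral_mul_le_Lp_mul_Lq (Measure.count) hpq
    hmg.aemeasurable hmh.aemeasurable
  have hgsq : ∀ j, g j ^ (2:ℝ)
      = ENNReal.ofReal (if r j * α / a j ^ 2 < |xplus j| then r j ^ 2 / a j ^ 2 else 0) := by
    intro j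
    have e : g j = ENNReal.ofReal
        (if r j * α / a j ^ 2 < |xplus j| then r j ^ 2 / a j ^ 2 else 0) ^ ((1:ℝ)/2) := rfl
    rw [e, ← ENNReal.rpow_mul]
    norm_num
  have hhsq : ∀ j, h j ^ (2:ℝ) = ENNReal.ofReal (a j ^ 2 * x j ^ 2) := by
    intro j
    have e : h j = ENNReal.ofReal (a j ^ 2 * x j ^ 2) ^ ((1:ℝ)/2) := rfl
    rw [e, ← ENNReal.rpow_mul]
    norm_num
  have CS : ∑' j, g j * h j ≤ (kSum a r α xplus) ^ ((1:ℝ)/2) * anorm2 a x := by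
    calc ∑' j, g j * h j = ∫⁻ j, (g * h) j ∂Measure.count := (lintegral_count _).symm
    _ ≤ (∫⁻ j, g j ^ (2:ℝ) ∂Measure.count) ^ ((1:ℝ)/2)
        * (∫⁻ j, h j ^ (2:ℝ) ∂Measure.count) ^ ((1:ℝ)/2) := holder
    _ = (kSum a r α xplus) ^ ((1:ℝ)/2) * anorm2 a x := by
        rw [lintegral_count, lintegral_count]
        simp only [hgsq, hhsq]
        rfl
  refine CS.trans (mul_le_mul_left ?_ _)
  -- bound kSum^{1/2} using the weak norm
  have h1 : ENNReal.ofReal α * (kSum a r α xplus) ^ (1/t) ≤ knorm a r t xplus :=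
    le_iSup₂ (f := fun (β:ℝ) (_ : β ∈ Set.Ioi (0:ℝ)) =>
      ENNReal.ofReal β * (kSum a r β xplus) ^ (1/t)) α (Set.mem_Ioi.mpr hα)
  have hα0 : ENNReal.ofReal α ≠ 0 := by simp [hα, hα.le, ENNReal.ofReal_eq_zero, not_le]
  have h2 : (kSum a r α xplus) ^ (1/t) ≤ knorm a r t xplus / ENNReal.ofReal α := by
    rw [ENNReal.le_div_iff_mul_le (Or.inl hα0) (Or.inl ENNReal.ofReal_ne_top)]
    rwa [mul_comm]
  have h3 : (kSum a r α xplus) ^ ((1:ℝ)/2)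
      = ((kSum a r α xplus) ^ (1/t)) ^ (t/2) := by
    rw [← ENNReal.rpow_mul]
    congr 1
    field_simp
  rw [h3]
  calc ((kSum a r α xplus) ^ (1/t)) ^ (t/2)
      ≤ (knorm a r t xplus / ENNReal.ofReal α) ^ (t/2) :=
        ENNReal.rpow_le_rpow h2 (by positivity)
    _ = knorm a r t xplus ^ (t/2) * ENNReal.ofReal (α ^ (-(t/2))) := by
        rw [ENNReal.div_rpow_of_nonneg _ _ (by positivity),
          ENNReal.ofReal_rpow_of_pos hα, div_eq_mul_inv,
          Real.rpow_neg hα.le, ENNReal.ofReal_inv_of_pos (Real.rpow_pos_of_pos hα _)]
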